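/- Let G be a finite loopless graph (parallel edges allowed) containing a spanning triangle-tree T. If the graph G − E(T), obtained from G by deleting the edges of T, contains a cycle (possibly a 2-cycle formed by parallel edges), then G is Z3-connected. -/

import Mathlib

open scoped Classical

/-- A finite loopless multigraph: finite vertex and edge types, each edge has an
unordered pair of distinct endpoints (parallel edges allowed, loops forbidden). -/
structure Multigraph where
  V : Type
  E : Type
  fintypeV : Fintype V
  fintypeE : Fintype E
  ends : E → Sym2 V
  loopless : ∀ e, ¬ (ends e).IsDiag

attribute [instance] Multigraph.fintypeV Multigraph.fintypeE

namespace Multigraph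

/-- `D` is an orientation of `G`: each edge is assigned an ordered pair (tail, head)
compatible with its endpoints. -/
def IsOrientation (G : Multigraph) (D : G.E → G.V × G.V) : Prop :=
  ∀ e, G.ends e = s((D e).1, (D e).2)

/-- Out-degree of `v` under the orientation `D` (tail = first component). -/
noncomputable def outDeg (G : Multigraph) (D : G.E → G.V × G.V) (v : G.V) : ℕ :=
  {e : G.E | (D e).1 = v}.ncard

/-- In-degree of `v` under the orientation `D` (head = second component). -/
noncomputable def inDeg (G : Multigraph) (D : G.E → G.V × G.V) (v : G.V) : ℕ :=
  {e : G.E | (D e).2 = v}.ncard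

/-- Flow conservation: at every vertex the sum of `f` over outgoing arcs equals the sum
over incoming arcs. -/
def IsConserving (G : Multigraph) (D : G.E → G.V × G.V) (f : G.E → ℤ) : Prop :=
  ∀ v : G.V,
    (∑ e : G.E, if (D e).1 = v then f e else 0) =
      ∑ e : G.E, if (D e).2 = v then f e else 0

/-- `G` has a nowhere-zero 3-flow. -/
def HasNZ3Flow (G : Multigraph) : Prop :=
  ∃ (D : G.E → G.V × G.V) (f : G.E → ℤ),
    G.IsOrientation D ∧ (∀ e, 1 ≤ |f e| ∧ |f e| ≤ 2) ∧ G.IsConserving D f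

/-- `G` is `Z3`-connected: every `Z3`-boundary is realized by some orientation. -/
def Z3Connected (G : Multigraph) : Prop :=
  ∀ β : G.V → ZMod 3, (∑ v : G.V, β v) = 0 →
    ∃ D : G.E → G.V × G.V, G.IsOrientation D ∧
      ∀ v : G.V, ((G.outDeg D v : ZMod 3) - (G.inDeg D v : ZMod 3)) = β v

/-- Degree of a vertex: number of edges incident with it. -/
noncomputable def degree (G : Multigraph) (v : G.V) : ℕ :=
  {e : G.E | v ∈ G.ends e}.ncard

/-- `(S, F)` is a triangle-tree subgraph of `G`: start from a triangle and repeatedly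
add a new vertex joined to the two endpoints of an existing edge. -/
inductive IsTriangleTree (G : Multigraph) : Set G.V → Set G.E → Prop
  | base (x y z : G.V) (e1 e2 e3 : G.E)
      (hxy : x ≠ y) (hxz : x ≠ z) (hyz : y ≠ z)
      (h1 : G.ends e1 = s(x, y)) (h2 : G.ends e2 = s(y, z)) (h3 : G.ends e3 = s(x, z)) :
      IsTriangleTree G {x, y, z} {e1, e2, e3}
  | grow (S : Set G.V) (F : Set G.E) (hT : IsTriangleTree G S F)
      (v a b : G.V) (hv : v ∉ S) (e : G.E) (he : e ∈ F) (hab : G.ends e = s(a, b))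
      (e1 e2 : G.E) (h1 : G.ends e1 = s(v, a)) (h2 : G.ends e2 = s(v, b)) :
      IsTriangleTree G (insert v S) (insert e1 (insert e2 F))

/-- `G` contains a spanning triangle-tree. -/
def HasSpanningTriangleTree (G : Multigraph) : Prop :=
  ∃ F : Set G.E, G.IsTriangleTree Set.univ F

/-- Degree of `v` inside the edge set `F`. -/
noncomputable def degIn (G : Multigraph) (F : Set G.E) (v : G.V) : ℕ :=
  {e : G.E | e ∈ F ∧ v ∈ G.ends e}.ncard

/-- `(S, F)` is a triangle-path subgraph: a triangle-tree which is either a single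
triangle or has exactly two leaves (vertices of degree 2). -/
def IsTrianglePath (G : Multigraph) (S : Set G.V) (F : Set G.E) : Prop :=
  G.IsTriangleTree S F ∧ (S.ncard = 3 ∨ {v ∈ S | G.degIn F v = 2}.ncard = 2)

/-- `(S, F)` is a subgraph of `G`: endpoints of every chosen edge are chosen vertices. -/
def Subgraph (G : Multigraph) (S : Set G.V) (F : Set G.E) : Prop :=
  ∀ e ∈ F, ∀ v, v ∈ G.ends e → v ∈ S

/-- `G` is isomorphic to the complete (simple) graph on `n` vertices. -/
def IsCompleteGraphOn (G : Multigraph) (n : ℕ) : Prop :=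
  ∃ (φ : G.V ≃ Fin n) (ψ : G.E ≃ {p : Sym2 (Fin n) // ¬ p.IsDiag}),
    ∀ e, Sym2.map (⇑φ) (G.ends e) = (ψ e).1

def IsK3 (G : Multigraph) : Prop := G.IsCompleteGraphOn 3

def IsK4 (G : Multigraph) : Prop := G.IsCompleteGraphOn 4

/-- `G` is a bull-growing of `H` (equivalently, `H` is the bull-reduction of `G`):
`u, v` are adjacent vertices of degree 3 in `G` with common neighbour `w`, the remaining
neighbours of `u`, `v` are `a`, `b`, and `H = G - u - v + ab` (with a loop deleted when
`a = b`). -/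
def IsBullGrowing (G H : Multigraph) : Prop :=
  ∃ (u v w a b : G.V) (euv euw evw eua evb : G.E),
    G.ends euv = s(u, v) ∧ G.ends euw = s(u, w) ∧ G.ends evw = s(v, w) ∧
    G.ends eua = s(u, a) ∧ G.ends evb = s(v, b) ∧
    a ≠ v ∧ b ≠ u ∧
    euv ≠ euw ∧ euv ≠ eua ∧ euw ≠ eua ∧
    euv ≠ evw ∧ euv ≠ evb ∧ evw ≠ evb ∧
    {e : G.E | u ∈ G.ends e} = {euv, euw, eua} ∧
    {e : G.E | v ∈ G.ends e} = {euv, evw, evb} ∧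
    ∃ φ : H.V → G.V, Function.Injective φ ∧
      Set.range φ = {x : G.V | x ≠ u ∧ x ≠ v} ∧
      ((a = b → ∃ ψ : H.E → G.E, Function.Injective ψ ∧
          Set.range ψ = {e : G.E | e ∉ ({euv, euw, evw, eua, evb} : Set G.E)} ∧
          ∀ e, G.ends (ψ e) = Sym2.map φ (H.ends e)) ∧
       (a ≠ b → ∃ (e0 : H.E) (ψ : H.E → G.E),
          Sym2.map φ (H.ends e0) = s(a, b) ∧
          Set.InjOn ψ {e : H.E | e ≠ e0} ∧
          ψ '' {e : H.E | e ≠ e0} = {e : G.E | e ∉ ({euv, euw, evw, eua, evb} : Set G.E)} ∧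
          ∀ e, e ≠ e0 → G.ends (ψ e) = Sym2.map φ (H.ends e)))

/-- `(S, F)` is a triangle (a `K3` subgraph) of `G`. -/
def IsTriangleSub (G : Multigraph) (S : Set G.V) (F : Set G.E) : Prop :=
  ∃ (x y z : G.V) (e1 e2 e3 : G.E),
    x ≠ y ∧ x ≠ z ∧ y ≠ z ∧
    G.ends e1 = s(x, y) ∧ G.ends e2 = s(y, z) ∧ G.ends e3 = s(x, z) ∧
    S = {x, y, z} ∧ F = {e1, e2, e3}

/-- The subgraph `(S, F)` of `G` is `Z3`-connected (as a graph in its own right). -/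
def SubZ3Connected (G : Multigraph) (S : Set G.V) (F : Set G.E) : Prop :=
  ∀ β : G.V → ZMod 3, (∀ v, v ∉ S → β v = 0) → (∑ v : G.V, β v) = 0 →
    ∃ D : G.E → G.V × G.V, G.IsOrientation D ∧
      ∀ v ∈ S, (({e : G.E | e ∈ F ∧ (D e).1 = v}.ncard : ZMod 3)
        - ({e : G.E | e ∈ F ∧ (D e).2 = v}.ncard : ZMod 3)) = β v

/-- `G` is the 2-sum of its subgraphs `(SA, FA)` and `(SB, FB)`:
`E(G) = E(A) ∪ E(B)`, `|E(A) ∩ E(B)| = 1` and `|V(A) ∩ V(B)| = 2`. -/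
def IsTwoSum (G : Multigraph) (SA : Set G.V) (FA : Set G.E)
    (SB : Set G.V) (FB : Set G.E) : Prop :=
  G.Subgraph SA FA ∧ G.Subgraph SB FB ∧
  FA ∪ FB = Set.univ ∧ (FA ∩ FB).ncard = 1 ∧ (SA ∩ SB).ncard = 2

/-- All vertices of `G` are joined by walks using only edges from `F`. -/
def ConnOn (G : Multigraph) (F : Set G.E) : Prop :=
  ∀ u v : G.V, Relation.ReflTransGen (fun x y => ∃ e ∈ F, G.ends e = s(x, y)) u v

/-- The spanning subgraph with edge set `F` is 2-edge-connected:
connected and with no cut edge. -/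
def TwoEdgeConnOn (G : Multigraph) (F : Set G.E) : Prop :=
  G.ConnOn F ∧ ∀ e ∈ F, G.ConnOn (F \ {e})

/-- The orientation `D` is strongly connected. -/
def StronglyConnected (G : Multigraph) (D : G.E → G.V × G.V) : Prop :=
  ∀ u v : G.V, Relation.ReflTransGen (fun x y => ∃ e : G.E, D e = (x, y)) u v

/-- `G` belongs to the class `S3`: every `Z3`-boundary is realized by a strongly
connected orientation. -/
def InS3 (G : Multigraph) : Prop :=
  ∀ β : G.V → ZMod 3, (∑ v : G.V, β v) = 0 →
    ∃ D : G.E → G.V × G.V, G.IsOrientation D ∧ G.StronglyConnected D ∧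
      ∀ v : G.V, ((G.outDeg D v : ZMod 3) - (G.inDeg D v : ZMod 3)) = β v

/-- `G` has a cycle (of length ≥ 2, so possibly a pair of parallel edges) all of whose
edges lie in `A`. -/
def HasCycleIn (G : Multigraph) (A : Set G.E) : Prop :=
  ∃ (vs : List G.V) (es : List G.E),
    2 ≤ vs.length ∧ vs.Nodup ∧ es.Nodup ∧ es.length = vs.length ∧
    (∀ e ∈ es, e ∈ A) ∧
    ∀ (i : ℕ) (h1 : i < es.length) (h2 : i < vs.length)
      (h3 : (i + 1) % vs.length < vs.length),
      G.ends (es.get ⟨i, h1⟩) = s(vs.get ⟨i, h2⟩, vs.get ⟨(i + 1) % vs.length, h3⟩)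

/-- `(vs, es)` is a path from `u` to `v` in `G`. -/
def IsPath (G : Multigraph) (u v : G.V) (vs : List G.V) (es : List G.E) : Prop :=
  vs.Nodup ∧ es.Nodup ∧ vs.head? = some u ∧ vs.getLast? = some v ∧
  vs.length = es.length + 1 ∧
  ∀ (i : ℕ) (h1 : i < es.length) (h2 : i < vs.length) (h3 : i + 1 < vs.length),
    G.ends (es.get ⟨i, h1⟩) = s(vs.get ⟨i, h2⟩, vs.get ⟨i + 1, h3⟩)

/-- `H` is isomorphic to the subgraph `(S, F)` of `G`. -/
def IsIsoToSub (H G : Multigraph) (S : Set G.V) (F : Set G.E) : Prop :=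
  ∃ (φ : H.V → G.V) (ψ : H.E → G.E),
    Function.Injective φ ∧ Set.range φ = S ∧
    Function.Injective ψ ∧ Set.range ψ = F ∧
    ∀ e, G.ends (ψ e) = Sym2.map φ (H.ends e)

/-- `G'` is (isomorphic to) the graph obtained from `G` by adding two new edges with
endpoint pairs `p` and `q`. -/
def IsAddTwoEdges (G : Multigraph) (p q : Sym2 G.V) (G' : Multigraph) : Prop :=
  ∃ (φ : G.V ≃ G'.V) (e1 e2 : G'.E), e1 ≠ e2 ∧
    G'.ends e1 = Sym2.map (⇑φ) p ∧ G'.ends e2 = Sym2.map (⇑φ) q ∧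
    ∃ ψ : G.E → G'.E, Function.Injective ψ ∧
      Set.range ψ = {e : G'.E | e ≠ e1 ∧ e ≠ e2} ∧
      ∀ e, G'.ends (ψ e) = Sym2.map (⇑φ) (G.ends e)

/-- `G'` is (isomorphic to) the graph obtained from `G` by deleting the edges in `X`
and adding one new edge with endpoint pair `p`. -/
def IsDeleteAddEdge (G : Multigraph) (X : Set G.E) (p : Sym2 G.V) (G' : Multigraph) : Prop :=
  ∃ (φ : G.V ≃ G'.V) (e0 : G'.E),
    G'.ends e0 = Sym2.map (⇑φ) p ∧
    ∃ ψ : {e : G.E // e ∉ X} → G'.E, Function.Injective ψ ∧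
      Set.range ψ = {e : G'.E | e ≠ e0} ∧
      ∀ e : {e : G.E // e ∉ X}, G'.ends (ψ e) = Sym2.map (⇑φ) (G.ends e.1)

/-- `G` is a crystal: a spanning triangle-path plus one extra edge joining its two
leaves. -/
def IsCrystal (G : Multigraph) : Prop :=
  ∃ (F : Set G.E) (u v : G.V) (e0 : G.E),
    G.IsTrianglePath Set.univ F ∧ u ≠ v ∧
    G.degIn F u = 2 ∧ G.degIn F v = 2 ∧
    e0 ∉ F ∧ G.ends e0 = s(u, v) ∧ insert e0 F = Set.univ

/-- The subgraph with edge set `F` is triangularly connected: any two of its edges lie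
on a common triangle-path inside it. -/
def TriangularlyConnectedOn (G : Multigraph) (F : Set G.E) : Prop :=
  ∀ e1 ∈ F, ∀ e2 ∈ F, ∃ (S : Set G.V) (F' : Set G.E),
    F' ⊆ F ∧ G.IsTrianglePath S F' ∧ e1 ∈ F' ∧ e2 ∈ F'

/-- `G` is triangularly connected. -/
def TriangularlyConnected (G : Multigraph) : Prop :=
  G.TriangularlyConnectedOn Set.univ

/-- `G` contains a spanning triangularly-connected subgraph. -/
def HasSpanningTriangularlyConnected (G : Multigraph) : Prop :=
  ∃ F : Set G.E, G.TriangularlyConnectedOn F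

/-- `G` admits a circular `t/s`-flow. -/
def HasCircularFlow (G : Multigraph) (t s : ℤ) : Prop :=
  ∃ (D : G.E → G.V × G.V) (f : G.E → ℤ),
    G.IsOrientation D ∧ (∀ e, s ≤ |f e| ∧ |f e| ≤ t - s) ∧ G.IsConserving D f

end Multigraph

/-- `G` can be obtained from `K4` by a (possibly empty) series of bull-growing
operations. -/
inductive FromK4ByBull : Multigraph → Prop
  | base (G : Multigraph) : G.IsK4 → FromK4ByBull G
  | grow (G H : Multigraph) : FromK4ByBull H → G.IsBullGrowing H → FromK4ByBull G

set_option linter.unusedSectionVars false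
set_option linter.unusedVariables false
set_option maxHeartbeats 1000000

namespace StmtNineAux
variable {V E : Type} [Fintype V] [Fintype E]

noncomputable def zv (a b : V) : V → ZMod 3 :=
  fun x => (if x = a then 1 else 0) - (if x = b then 1 else 0)

noncomputable def tri (a b c : V) : V → ZMod 3 :=
  fun x => ((if x = a then 1 else 0) + (if x = b then 1 else 0)) + (if x = c then 1 else 0)

noncomputable def bnd (o : E → V × V) (ε : E → ZMod 3) (x : V) : ZMod 3 :=
  ∑ e : E, ε e * ((if x = (o e).1 then 1 else 0) - (if x = (o e).2 then 1 else 0))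

def Reach (o : E → V × V) (F : Set E) (β : V → ZMod 3) : Prop :=
  ∃ ε : E → ZMod 3, (∀ e, e ∉ F → ε e = 0) ∧ (∀ e ∈ F, ε e ≠ 0) ∧ ∀ x, bnd o ε x = β x

lemma reach_congr {o : E → V × V} {F : Set E} {β γ : V → ZMod 3}
    (h : Reach o F β) (hbg : ∀ x, β x = γ x) : Reach o F γ := by
  obtain ⟨ε, h1, h2, h3⟩ := h
  exact ⟨ε, h1, h2, fun x => (h3 x).trans (hbg x)⟩

lemma reach_union {o : E → V × V} {F1 F2 : Set E} {β1 β2 : V → ZMod 3}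
    (hd : Disjoint F1 F2) (h1 : Reach o F1 β1) (h2 : Reach o F2 β2) :
    Reach o (F1 ∪ F2) (fun x => β1 x + β2 x) := by
  obtain ⟨ε1, h11, h12, h13⟩ := h1
  obtain ⟨ε2, h21, h22, h23⟩ := h2
  refine ⟨fun e => ε1 e + ε2 e, ?_, ?_, ?_⟩
  · intro e he
    show ε1 e + ε2 e = 0
    rw [h11 e (fun h => he (Or.inl h)), h21 e (fun h => he (Or.inr h)), add_zero]
  · rintro e (he | he)
    · show ε1 e + ε2 e ≠ 0
      rw [h21 e (fun h => (Set.disjoint_left.mp hd he) h), add_zero]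
      exact h12 e he
    · show ε1 e + ε2 e ≠ 0
      rw [h11 e (fun h => (Set.disjoint_left.mp hd h) he), zero_add]
      exact h22 e he
  · intro x
    have : bnd o (fun e => ε1 e + ε2 e) x = bnd o ε1 x + bnd o ε2 x := by
      unfold bnd
      rw [← Finset.sum_add_distrib]
      exact Finset.sum_congr rfl fun e _ => by ring
    rw [this, h13 x, h23 x]

lemma reach_single {o : E → V × V} {ends : E → Sym2 V}
    (hends : ∀ e, ends e = s((o e).1, (o e).2))
    (e : E) (a b : V) (hab : ends e = s(a, b)) (c : ZMod 3) (hc : c ≠ 0) :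
    Reach o {e} (fun x => c * zv a b x) := by
  have h := (hends e).symm.trans hab
  rw [Sym2.eq_iff] at h
  have key : ∀ d : ZMod 3, d ≠ 0 → ∀ a' b', (o e).1 = a' → (o e).2 = b' →
      Reach o {e} (fun x => d * zv a' b' x) := by
    intro d hd a' b' h1 h2
    refine ⟨fun e' => if e' = e then d else 0, ?_, ?_, ?_⟩
    · intro e' he'
      change (if e' = e then d else 0) = 0
      rw [if_neg (fun h => he' (by simp [h]))]
    · intro e' he'
      rw [Set.mem_singleton_iff] at he'
      change (if e' = e then d else 0) ≠ 0
      rw [if_pos he']; exact hd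
    · intro x
      unfold bnd
      rw [Finset.sum_eq_single e]
      · change (if e = e then d else 0) * _ = _
        rw [if_pos rfl, h1, h2]
        simp only [zv]
      · intro e' _ hne
        change (if e' = e then d else 0) * _ = 0
        rw [if_neg hne, zero_mul]
      · intro h; exact absurd (Finset.mem_univ e) h
  rcases h with ⟨h1, h2⟩ | ⟨h1, h2⟩
  · exact key c hc a b h1 h2
  · have := key (-c) (by simpa using hc) b a h1 h2
    refine reach_congr this fun x => ?_
    simp only [zv]
    ring

lemma reach_empty {o : E → V × V} : Reach o (∅ : Set E) (fun _ => 0) := by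
  refine ⟨fun _ => 0, fun _ _ => rfl, fun e he => absurd he (Set.notMem_empty e), fun x => ?_⟩
  unfold bnd; simp

lemma reach_finset_sum {o : E → V × V} {ι : Type*} (s : Finset ι) (g : ι → E)
    (hg : Set.InjOn g s) (βf : ι → V → ZMod 3)
    (h : ∀ i ∈ s, Reach o {g i} (βf i)) :
    Reach o (g '' s) (fun x => ∑ i ∈ s, βf i x) := by
  classical
  induction s using Finset.induction with
  | empty => simpa using reach_empty
  | @insert a s ha ih =>
    have hd : Disjoint ({g a} : Set E) (g '' s) := by
      rw [Set.disjoint_left]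
      rintro e he ⟨i, hi, hgi⟩
      rw [Set.mem_singleton_iff] at he
      subst he
      have : a = i := hg (by simp) (by simp [hi]) hgi.symm
      exact ha (this ▸ hi)
    have h1 : Reach o {g a} (βf a) := h a (by simp)
    have h2 : Reach o (g '' s) (fun x => ∑ i ∈ s, βf i x) := by
      refine ih (fun x hx y hy => hg (by simp [hx]) (by simp [hy])) ?_
      exact fun i hi => h i (by simp [hi])
    have := reach_union hd h1 h2
    refine reach_congr (β := fun x => βf a x + ∑ i ∈ s, βf i x) ?_ ?_
    · convert this using 2
      push_cast
      rw [Set.image_insert_eq, Set.singleton_union]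
    · intro x
      rw [Finset.sum_insert ha]

lemma sum_mul_ind (μ : V → ZMod 3) (a : V) : ∑ x : V, μ x * (if x = a then 1 else 0) = μ a := by
  have : ∀ x : V, μ x * (if x = a then 1 else 0) = if x = a then μ x else 0 := by
    intro x; split_ifs <;> simp
  rw [Finset.sum_congr rfl fun x _ => this x, Finset.sum_ite_eq' Finset.univ a μ,
    if_pos (Finset.mem_univ a)]

lemma sum_mul_zv (μ : V → ZMod 3) (a b : V) : ∑ x : V, μ x * zv a b x = μ a - μ b := by
  unfold zv
  have : ∀ x : V, μ x * ((if x = a then (1:ZMod 3) else 0) - (if x = b then 1 else 0))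
      = μ x * (if x = a then 1 else 0) - μ x * (if x = b then 1 else 0) := fun x => by ring
  rw [Finset.sum_congr rfl fun x _ => this x, Finset.sum_sub_distrib, sum_mul_ind, sum_mul_ind]

lemma sum_mul_tri (μ : V → ZMod 3) (a b c : V) :
    ∑ x : V, μ x * tri a b c x = μ a + μ b + μ c := by
  unfold tri
  have : ∀ x : V, μ x * (((if x = a then (1:ZMod 3) else 0) + (if x = b then 1 else 0)) + (if x = c then 1 else 0))
      = (μ x * (if x = a then 1 else 0) + μ x * (if x = b then 1 else 0)) + μ x * (if x = c then 1 else 0) :=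
    fun x => by ring
  rw [Finset.sum_congr rfl fun x _ => this x, Finset.sum_add_distrib, Finset.sum_add_distrib,
    sum_mul_ind, sum_mul_ind, sum_mul_ind]

noncomputable def muB (x y z : V) : V → ZMod 3 := fun t => if t = x then 0 else if t = y then 1 else 2

lemma muB_x (x y z : V) : muB x y z x = 0 := if_pos rfl

lemma muB_y {x y : V} (z : V) (hxy : x ≠ y) : muB x y z y = 1 := by
  unfold muB; rw [if_neg (Ne.symm hxy), if_pos rfl]

lemma muB_z {x y z : V} (hxz : x ≠ z) (hyz : y ≠ z) : muB x y z z = 2 := by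
  unfold muB; rw [if_neg (Ne.symm hxz), if_neg (Ne.symm hyz)]

lemma sum_zv (a b : V) : ∑ x : V, zv a b x = 0 := by
  have := sum_mul_zv (fun _ => (1:ZMod 3)) a b
  simp only [one_mul] at this
  rw [this, sub_self]

lemma sum_tri (a b c : V) : ∑ x : V, tri a b c x = 0 := by
  have := sum_mul_tri (fun _ => (1:ZMod 3)) a b c
  simp only [one_mul] at this
  rw [this]; decide

end StmtNineAux

open StmtNineAux

lemma tt_main (G : Multigraph) (o : G.E → G.V × G.V)
    (ho : ∀ e, G.ends e = s((o e).1, (o e).2))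
    {S : Set G.V} {F : Set G.E} (hT : G.IsTriangleTree S F) :
    (∀ e ∈ F, ∀ y, y ∈ G.ends e → y ∈ S) ∧
    ∃ (k : ℕ) (w : Fin k → G.V → ZMod 3) (μ : G.V → ZMod 3),
      (∀ t x, x ∉ S → w t x = 0) ∧
      (∀ c : Fin k → ZMod 3, (∀ x, ∑ t, c t * w t x = 0) → ∀ t, c t = 0) ∧
      (∀ t, ∑ x : G.V, μ x * w t x = 0) ∧
      (∀ e ∈ F, ∀ a b, G.ends e = s(a, b) → μ a ≠ μ b) ∧
      (∀ β : G.V → ZMod 3, (∀ x, x ∉ S → β x = 0) → (∑ x : G.V, β x) = 0 →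
        Reach o F β ∨ ∃ σ : Fin k → ZMod 3, (∀ t, σ t = 1 ∨ σ t = -1) ∧
          ∀ x, β x = ∑ t, σ t * w t x) := by
  induction hT with
  | base x y z e1 e2 e3 hxy hxz hyz h1 h2 h3 =>
    have hd12 : e1 ≠ e2 := by
      intro h; rw [h, h2] at h1; rw [Sym2.eq_iff] at h1
      rcases h1 with ⟨ha, hb⟩ | ⟨ha, hb⟩
      · exact hxy ha.symm
      · exact hxz hb.symm
    have hd13 : e1 ≠ e3 := by
      intro h; rw [h, h3] at h1; rw [Sym2.eq_iff] at h1
      rcases h1 with ⟨ha, hb⟩ | ⟨ha, hb⟩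
      · exact hyz hb.symm
      · exact hxy ha
    have hd23 : e2 ≠ e3 := by
      intro h; rw [h, h3] at h2; rw [Sym2.eq_iff] at h2
      rcases h2 with ⟨ha, hb⟩ | ⟨ha, hb⟩
      · exact hxy ha
      · exact hxz ha
    constructor
    · rintro e' he' y' hy'
      rcases he' with he' | he' | he' <;> subst he'
      · rw [h1, Sym2.mem_iff] at hy'
        rcases hy' with hy' | hy' <;> simp [hy']
      · rw [h2, Sym2.mem_iff] at hy'
        rcases hy' with hy' | hy' <;> simp [hy']
      · rw [h3, Sym2.mem_iff] at hy'
        rcases hy' with hy' | hy' <;> simp [hy']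
    refine ⟨1, fun _ => tri x y z, muB x y z, ?_, ?_, ?_, ?_, ?_⟩
    · intro t x' hx'
      simp only [Set.mem_insert_iff, Set.mem_singleton_iff, not_or] at hx'
      simp [tri, hx'.1, hx'.2.1, hx'.2.2]
    · intro c hc t
      have hx := hc x
      rw [Fin.sum_univ_one] at hx
      have hx' : c 0 * tri x y z x = 0 := hx
      have htri : tri x y z x = 1 := by simp [tri, hxy, hxz]
      rw [htri, mul_one] at hx'
      rw [Subsingleton.elim t 0]
      exact hx'
    · intro t
      rw [sum_mul_tri, muB_x, muB_y z hxy, muB_z hxz hyz]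
      decide
    · intro e' he' a' b' hab'
      rcases he' with he' | he' | he' <;> subst he'
      · rcases Sym2.eq_iff.mp (h1.symm.trans hab') with ⟨ha, hb⟩ | ⟨ha, hb⟩ <;>
          subst ha <;> subst hb
        · rw [muB_x, muB_y z hxy]; decide
        · rw [muB_x, muB_y z hxy]; decide
      · rcases Sym2.eq_iff.mp (h2.symm.trans hab') with ⟨ha, hb⟩ | ⟨ha, hb⟩ <;>
          subst ha <;> subst hb
        · rw [muB_y z hxy, muB_z hxz hyz]; decide
        · rw [muB_y z hxy, muB_z hxz hyz]; decide
      · rcases Sym2.eq_iff.mp (h3.symm.trans hab') with ⟨ha, hb⟩ | ⟨ha, hb⟩ <;>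
          subst ha <;> subst hb
        · rw [muB_x, muB_z hxz hyz]; decide
        · rw [muB_x, muB_z hxz hyz]; decide
    · intro β hsupp hsum
      have hpt : ∀ t, β t = (if t = x then β x else 0) + (if t = y then β y else 0)
          + (if t = z then β z else 0) := by
        intro t
        by_cases htx : t = x
        · subst htx; rw [if_pos rfl, if_neg hxy, if_neg hxz]; ring
        by_cases hty : t = y
        · subst hty; rw [if_neg (Ne.symm hxy), if_pos rfl, if_neg hyz]; ring
        by_cases htz : t = z
        · subst htz; rw [if_neg (Ne.symm hxz), if_neg (Ne.symm hyz), if_pos rfl]; ring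
        · rw [hsupp t (by simp [htx, hty, htz]), if_neg htx, if_neg hty, if_neg htz]; ring
      have hsum3 : β x + β y + β z = 0 := by
        rw [← hsum, Finset.sum_congr rfl fun t _ => hpt t, Finset.sum_add_distrib,
          Finset.sum_add_distrib, Finset.sum_ite_eq' Finset.univ x (fun _ => β x),
          Finset.sum_ite_eq' Finset.univ y (fun _ => β y),
          Finset.sum_ite_eq' Finset.univ z (fun _ => β z),
          if_pos (Finset.mem_univ x), if_pos (Finset.mem_univ y), if_pos (Finset.mem_univ z)]
      have hFeq : ({e1} ∪ ({e2} ∪ {e3}) : Set G.E) = {e1, e2, e3} := by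
        rw [Set.singleton_union, Set.singleton_union]
      have solve : ∀ c1 c2 c3 : ZMod 3, c1 ≠ 0 → c2 ≠ 0 → c3 ≠ 0 →
          (c1 + c3 = β x) → (c2 - c1 = β y) → (- c2 - c3 = β z) →
          Reach o {e1, e2, e3} β := by
        intro c1 c2 c3 hc1 hc2 hc3 hX hY hZ
        have r1 := reach_single ho e1 x y h1 c1 hc1
        have r2 := reach_single ho e2 y z h2 c2 hc2
        have r3 := reach_single ho e3 x z h3 c3 hc3
        have r23 := reach_union (Set.disjoint_singleton.mpr hd23) r2 r3
        have r123 := reach_union (by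
          rw [Set.disjoint_union_right]
          exact ⟨Set.disjoint_singleton.mpr hd12, Set.disjoint_singleton.mpr hd13⟩) r1 r23
        rw [hFeq] at r123
        refine reach_congr r123 fun t => ?_
        by_cases htx : t = x
        · subst htx; rw [← hX]; simp [zv, hxy, hxz]
        by_cases hty : t = y
        · subst hty; rw [← hY]; simp [zv, Ne.symm hxy, hyz]; ring
        by_cases htz : t = z
        · subst htz; rw [← hZ]; simp [zv, Ne.symm hxz, Ne.symm hyz]; ring
        · rw [hsupp t (by simp [htx, hty, htz])]; simp [zv, htx, hty, htz]
      have hsig : ∀ s0 : ZMod 3, s0 ≠ 0 → (β x = s0) → (β y = s0) → (β z = s0) →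
          ∃ σ : Fin 1 → ZMod 3, (∀ t, σ t = 1 ∨ σ t = -1) ∧
            ∀ t, β t = ∑ t', σ t' * tri x y z t := by
        intro s0 hs0 hbx hby hbz
        refine ⟨fun _ => s0, fun t => ?_, fun t => ?_⟩
        · rcases (by decide : ∀ u : ZMod 3, u = 0 ∨ u = 1 ∨ u = 2) s0 with h|h|h
          · exact absurd h hs0
          · exact Or.inl h
          · refine Or.inr ?_
            show s0 = -1
            rw [h]; decide
        · rw [Fin.sum_univ_one]
          by_cases htx : t = x
          · subst htx; rw [hbx]; simp [tri, hxy, hxz]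
          by_cases hty : t = y
          · subst hty; rw [hby]; simp [tri, Ne.symm hxy, hyz]
          by_cases htz : t = z
          · subst htz; rw [hbz]; simp [tri, Ne.symm hxz, Ne.symm hyz]
          · rw [hsupp t (by simp [htx, hty, htz])]; simp [tri, htx, hty, htz]
      have h30 : (3 : ZMod 3) = 0 := by decide
      rcases (by decide : ∀ u : ZMod 3, u = 0 ∨ u = 1 ∨ u = 2) (β x) with hp|hp|hp <;>
        rcases (by decide : ∀ u : ZMod 3, u = 0 ∨ u = 1 ∨ u = 2) (β y) with hq|hq|hq
      · have hr : β z = 0 := by rw [hp, hq] at hsum3; linear_combination hsum3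
        exact Or.inl (solve 1 1 (-1) (by decide) (by decide) (by decide)
          (by rw [hp]; decide) (by rw [hq]; decide) (by rw [hr]; decide))
      · have hr : β z = 2 := by rw [hp, hq] at hsum3; linear_combination hsum3 - h30
        exact Or.inl (solve 1 (-1) (-1) (by decide) (by decide) (by decide)
          (by rw [hp]; decide) (by rw [hq]; decide) (by rw [hr]; decide))
      · have hr : β z = 1 := by rw [hp, hq] at hsum3; linear_combination hsum3 - h30
        exact Or.inl (solve (-1) 1 1 (by decide) (by decide) (by decide)
          (by rw [hp]; decide) (by rw [hq]; decide) (by rw [hr]; decide))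
      · have hr : β z = 2 := by rw [hp, hq] at hsum3; linear_combination hsum3 - h30
        exact Or.inl (solve (-1) (-1) (-1) (by decide) (by decide) (by decide)
          (by rw [hp]; decide) (by rw [hq]; decide) (by rw [hr]; decide))
      · have hr : β z = 1 := by rw [hp, hq] at hsum3; linear_combination hsum3 - h30
        exact Or.inr (hsig 1 (by decide) hp hq hr)
      · have hr : β z = 0 := by rw [hp, hq] at hsum3; linear_combination hsum3 - h30
        exact Or.inl (solve (-1) 1 (-1) (by decide) (by decide) (by decide)
          (by rw [hp]; decide) (by rw [hq]; decide) (by rw [hr]; decide))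
      · have hr : β z = 1 := by rw [hp, hq] at hsum3; linear_combination hsum3 - h30
        exact Or.inl (solve 1 1 1 (by decide) (by decide) (by decide)
          (by rw [hp]; decide) (by rw [hq]; decide) (by rw [hr]; decide))
      · have hr : β z = 0 := by rw [hp, hq] at hsum3; linear_combination hsum3 - h30
        exact Or.inl (solve 1 (-1) 1 (by decide) (by decide) (by decide)
          (by rw [hp]; decide) (by rw [hq]; decide) (by rw [hr]; decide))
      · have hr : β z = 2 := by rw [hp, hq] at hsum3; linear_combination hsum3 - 2 * h30
        exact Or.inr (hsig 2 (by decide) hp hq (by rw [hr]))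
  | grow S F hT v a b hv e he hab e1 e2 h1 h2 ih =>
    obtain ⟨hsub, k, w, μ, hWsupp, hind, hμw, hcol, hreach⟩ := ih
    have haS : a ∈ S := hsub e he a (by rw [hab]; simp)
    have hbS : b ∈ S := hsub e he b (by rw [hab]; simp)
    have hva : v ≠ a := fun h => hv (h ▸ haS)
    have hvb : v ≠ b := fun h => hv (h ▸ hbS)
    have hab2 : a ≠ b := by
      have := G.loopless e
      rw [hab, Sym2.mk_isDiag_iff] at this
      exact this
    have he1F : e1 ∉ F := fun hm => hv (hsub e1 hm v (by rw [h1]; simp))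
    have he2F : e2 ∉ F := fun hm => hv (hsub e2 hm v (by rw [h2]; simp))
    have he12 : e1 ≠ e2 := by
      intro h
      rw [h, h2] at h1
      rcases Sym2.eq_iff.mp h1 with ⟨_, hq⟩ | ⟨hq, _⟩
      · exact hab2 hq.symm
      · exact hva hq
    have hsub' : ∀ e' ∈ insert e1 (insert e2 F), ∀ y, y ∈ G.ends e' → y ∈ insert v S := by
      rintro e' he' y' hy'
      rcases he' with he' | he' | he'
      · subst he'
        rw [h1, Sym2.mem_iff] at hy'
        rcases hy' with hy' | hy' <;> simp [hy', haS]
      · subst he'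
        rw [h2, Sym2.mem_iff] at hy'
        rcases hy' with hy' | hy' <;> simp [hy', hbS]
      · exact Set.mem_insert_of_mem _ (hsub e' he' y' hy')
    refine ⟨hsub', k + 1, Fin.snoc w (tri v a b), Function.update μ v (-(μ a + μ b)),
      ?_, ?_, ?_, ?_, ?_⟩
    · -- support
      intro t x' hx'
      simp only [Set.mem_insert_iff, not_or] at hx'
      induction t using Fin.lastCases with
      | last =>
        rw [Fin.snoc_last]
        have hxa : x' ≠ a := fun h => hx'.2 (h ▸ haS)
        have hxb : x' ≠ b := fun h => hx'.2 (h ▸ hbS)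
        simp [tri, hx'.1, hxa, hxb]
      | cast t' =>
        rw [Fin.snoc_castSucc]
        exact hWsupp t' x' hx'.2
    · -- independence
      have hsplit : ∀ (c : Fin (k+1) → ZMod 3) (x : G.V),
          ∑ t, c t * (Fin.snoc w (tri v a b) : Fin (k+1) → G.V → ZMod 3) t x
            = (∑ t : Fin k, c t.castSucc * w t x) + c (Fin.last k) * tri v a b x := by
        intro c x
        rw [Fin.sum_univ_castSucc]
        congr 1
        · exact Finset.sum_congr rfl fun t _ => by rw [Fin.snoc_castSucc]
        · rw [Fin.snoc_last]
      intro c hc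
      have hlast : c (Fin.last k) = 0 := by
        have hcv := hc v
        rw [hsplit] at hcv
        have hz : ∀ t : Fin k, c t.castSucc * w t v = 0 := fun t => by
          rw [hWsupp t v hv, mul_zero]
        rw [Finset.sum_congr rfl fun t _ => hz t, Finset.sum_const_zero, zero_add] at hcv
        have htriv : tri v a b v = 1 := by simp [tri, hva, hvb]
        rwa [htriv, mul_one] at hcv
      have hrest : ∀ t : Fin k, c t.castSucc = 0 := by
        apply hind fun t => c t.castSucc
        intro x
        have hcx := hc x
        rw [hsplit, hlast, zero_mul, add_zero] at hcx
        exact hcx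
      intro t
      induction t using Fin.lastCases with
      | last => exact hlast
      | cast t' => exact hrest t'
    · -- mu-hat
      intro t
      induction t using Fin.lastCases with
      | last =>
        rw [Fin.snoc_last, sum_mul_tri, Function.update_self,
          Function.update_of_ne (Ne.symm hva), Function.update_of_ne (Ne.symm hvb)]
        ring
      | cast t' =>
        rw [Fin.snoc_castSucc]
        have : ∀ x, Function.update μ v (-(μ a + μ b)) x * w t' x = μ x * w t' x := by
          intro x
          by_cases hxv : x = v
          · rw [hxv, hWsupp t' v hv, mul_zero, mul_zero]
          · rw [Function.update_of_ne hxv]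
        rw [Finset.sum_congr rfl fun x _ => this x]
        exact hμw t'
    · -- colouring
      have hkey : -(μ a + μ b) ≠ μ a := by
        intro hEq
        apply hcol e he a b hab
        have h30 : (3 : ZMod 3) = 0 := by decide
        linear_combination hEq + μ a * h30
      have hkey2 : -(μ a + μ b) ≠ μ b := by
        intro hEq
        apply hcol e he a b hab
        have h30 : (3 : ZMod 3) = 0 := by decide
        linear_combination - hEq - μ b * h30
      intro e' he' a' b' hab'
      rcases he' with he' | he' | he'
      · subst he'
        rcases Sym2.eq_iff.mp (h1.symm.trans hab') with ⟨ha, hb⟩ | ⟨ha, hb⟩ <;>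
          subst ha <;> subst hb
        · rw [Function.update_self, Function.update_of_ne (Ne.symm hva)]
          exact hkey
        · rw [Function.update_self, Function.update_of_ne (Ne.symm hva)]
          exact fun h => hkey h.symm
      · subst he'
        rcases Sym2.eq_iff.mp (h2.symm.trans hab') with ⟨ha, hb⟩ | ⟨ha, hb⟩ <;>
          subst ha <;> subst hb
        · rw [Function.update_self, Function.update_of_ne (Ne.symm hvb)]
          exact hkey2
        · rw [Function.update_self, Function.update_of_ne (Ne.symm hvb)]
          exact fun h => hkey2 h.symm
      · have ha'S : a' ∈ S := hsub e' he' a' (by rw [hab']; simp)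
        have hb'S : b' ∈ S := hsub e' he' b' (by rw [hab']; simp)
        rw [Function.update_of_ne (show a' ≠ v from fun h => hv (h ▸ ha'S)),
          Function.update_of_ne (show b' ≠ v from fun h => hv (h ▸ hb'S))]
        exact hcol e' he' a' b' hab'
    · -- reachability
      have hsplit : ∀ (c : Fin (k+1) → ZMod 3) (x : G.V),
          ∑ t, c t * (Fin.snoc w (tri v a b) : Fin (k+1) → G.V → ZMod 3) t x
            = (∑ t : Fin k, c t.castSucc * w t x) + c (Fin.last k) * tri v a b x := by
        intro c x
        rw [Fin.sum_univ_castSucc]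
        congr 1
        · exact Finset.sum_congr rfl fun t _ => by rw [Fin.snoc_castSucc]
        · rw [Fin.snoc_last]
      have h30 : (3 : ZMod 3) = 0 := by decide
      have hd12 : Disjoint ({e1} : Set G.E) {e2} := Set.disjoint_singleton.mpr he12
      have hFeq : (({e1} ∪ {e2}) ∪ F : Set G.E) = insert e1 (insert e2 F) := by
        rw [Set.union_assoc, Set.singleton_union, Set.singleton_union]
      have hdisjF : Disjoint ({e1} ∪ {e2} : Set G.E) F := by
        rw [Set.disjoint_union_left]
        constructor
        · exact Set.disjoint_left.mpr fun e' he'' hf => by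
            rw [Set.mem_singleton_iff] at he''; exact he1F (he'' ▸ hf)
        · exact Set.disjoint_left.mpr fun e' he'' hf => by
            rw [Set.mem_singleton_iff] at he''; exact he2F (he'' ▸ hf)
      have combine : ∀ β γ α : G.V → ZMod 3, Reach o ({e1} ∪ {e2}) γ → Reach o F α →
          (∀ x, α x + γ x = β x) → Reach o (insert e1 (insert e2 F)) β := by
        intro β γ α hγ hα hEq
        have h := reach_union hdisjF hγ hα
        rw [hFeq] at h
        exact reach_congr h fun x => by rw [← hEq x]; ring
      have pair : ∀ c1 c2 : ZMod 3, c1 ≠ 0 → c2 ≠ 0 →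
          Reach o ({e1} ∪ {e2}) (fun x => c1 * zv v a x + c2 * zv v b x) :=
        fun c1 c2 hc1 hc2 =>
          reach_union hd12 (reach_single ho e1 v a h1 c1 hc1) (reach_single ho e2 v b h2 c2 hc2)
      intro β hβsupp hβsum
      have hβS : ∀ x, x ∉ S → x ≠ v → β x = 0 := fun x hx hxv =>
        hβsupp x (by simp [hx, hxv])
      rcases (by decide : ∀ u : ZMod 3, u = 0 ∨ u = 1 ∨ u = 2) (β v) with hv0|hv1|hv2
      · -- slice 0 : two attempts
        have mkα : ∀ p q : G.V, p ∈ S → q ∈ S →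
            ((∀ x, x ∉ S → (fun x => β x - zv p q x) x = 0) ∧
              (∑ x : G.V, (β x - zv p q x)) = 0) := by
          intro p q hp hq
          constructor
          · intro x hx
            have hxp : x ≠ p := fun h => hx (h ▸ hp)
            have hxq : x ≠ q := fun h => hx (h ▸ hq)
            by_cases hxv : x = v
            · show β x - zv p q x = 0
              rw [hxv, hv0]
              simp [zv, show v ≠ p from fun h => hv (h ▸ hp),
                show v ≠ q from fun h => hv (h ▸ hq)]
            · show β x - zv p q x = 0
              rw [hβS x hx hxv]
              simp [zv, hxp, hxq]
          · rw [Finset.sum_sub_distrib, hβsum, sum_zv, sub_zero]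
        obtain ⟨hsuppA, hsumA⟩ := mkα b a hbS haS
        rcases hreach (fun x => β x - zv b a x) hsuppA hsumA with hRA | ⟨σ, hσ, hσeq⟩
        · left
          refine combine β (zv b a) (fun x => β x - zv b a x)
            (reach_congr (pair 1 (-1) (by decide) (by decide)) (fun x => ?_)) hRA
            (fun x => by ring)
          show (1 : ZMod 3) * zv v a x + (-1) * zv v b x = zv b a x
          simp only [zv]
          ring
        · obtain ⟨hsuppB, hsumB⟩ := mkα a b haS hbS
          rcases hreach (fun x => β x - zv a b x) hsuppB hsumB with hRB | ⟨τ, hτ, hτeq⟩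
          · left
            refine combine β (zv a b) (fun x => β x - zv a b x)
              (reach_congr (pair (-1) 1 (by decide) (by decide)) (fun x => ?_)) hRB
              (fun x => by ring)
            show (-1 : ZMod 3) * zv v a x + 1 * zv v b x = zv a b x
            simp only [zv]
            ring
          · exfalso
            have hzero : ∀ (ρ : Fin k → ZMod 3) (δ : G.V → ZMod 3),
                (∀ x, δ x = ∑ t, ρ t * w t x) → ∑ x : G.V, μ x * δ x = 0 := by
              intro ρ δ hδ
              have hpt : ∀ x, μ x * δ x = ∑ t, ρ t * (μ x * w t x) := by
                intro x
                rw [hδ x, Finset.mul_sum]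
                exact Finset.sum_congr rfl fun t _ => by ring
              rw [Finset.sum_congr rfl fun x _ => hpt x, Finset.sum_comm]
              refine Finset.sum_eq_zero fun t _ => ?_
              rw [← Finset.mul_sum, hμw t, mul_zero]
            have hA0 := hzero σ _ hσeq
            have hB0 := hzero τ _ hτeq
            have hAB : ∑ x : G.V, (μ x * (β x - zv b a x) - μ x * (β x - zv a b x)) = 0 := by
              rw [Finset.sum_sub_distrib, hA0, hB0, sub_zero]
            have hAB2 : ∑ x : G.V, (μ x * (β x - zv b a x) - μ x * (β x - zv a b x))
                = ∑ x : G.V, μ x * (zv a b x - zv b a x) := by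
              refine Finset.sum_congr rfl fun x _ => by ring
            have hAB3 : ∑ x : G.V, μ x * (zv a b x - zv b a x)
                = (μ a - μ b) - (μ b - μ a) := by
              have : ∀ x, μ x * (zv a b x - zv b a x)
                  = μ x * zv a b x - μ x * zv b a x := fun x => by ring
              rw [Finset.sum_congr rfl fun x _ => this x, Finset.sum_sub_distrib,
                sum_mul_zv, sum_mul_zv]
            have hfin : (μ a - μ b) - (μ b - μ a) = 0 := by
              rw [← hAB3, ← hAB2, hAB]
            exact hcol e he a b hab (by linear_combination 2 * hfin + (μ b - μ a) * h30)
      · -- slice 1 : forced (-1, -1), gamma = tri v a b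
        have hsuppA : ∀ x, x ∉ S → (fun x => β x - tri v a b x) x = 0 := by
          intro x hx
          have hxa : x ≠ a := fun h => hx (h ▸ haS)
          have hxb : x ≠ b := fun h => hx (h ▸ hbS)
          by_cases hxv : x = v
          · show β x - tri v a b x = 0
            rw [hxv, hv1]
            simp [tri, hva, hvb]
          · show β x - tri v a b x = 0
            rw [hβS x hx hxv]
            simp [tri, hxv, hxa, hxb]
        have hsumA : (∑ x : G.V, (β x - tri v a b x)) = 0 := by
          rw [Finset.sum_sub_distrib, hβsum, sum_tri, sub_zero]
        rcases hreach (fun x => β x - tri v a b x) hsuppA hsumA with hRA | ⟨σ, hσ, hσeq⟩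
        · left
          refine combine β (tri v a b) (fun x => β x - tri v a b x)
            (reach_congr (pair (-1) (-1) (by decide) (by decide)) (fun x => ?_)) hRA
            (fun x => by ring)
          show (-1 : ZMod 3) * zv v a x + (-1) * zv v b x = tri v a b x
          simp only [zv, tri]
          linear_combination (-(if x = v then (1 : ZMod 3) else 0)) * h30
        · right
          refine ⟨Fin.snoc σ 1, fun t => ?_, fun x => ?_⟩
          · induction t using Fin.lastCases with
            | last => rw [Fin.snoc_last]; exact Or.inl rfl
            | cast t' => rw [Fin.snoc_castSucc]; exact hσ t'
          · rw [hsplit, Finset.sum_congr rfl fun t _ => by rw [Fin.snoc_castSucc],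
              Fin.snoc_last]
            have := hσeq x
            linear_combination this
      · -- slice 2 : forced (1, 1), gamma = -tri v a b
        have hsuppA : ∀ x, x ∉ S → (fun x => β x + tri v a b x) x = 0 := by
          intro x hx
          have hxa : x ≠ a := fun h => hx (h ▸ haS)
          have hxb : x ≠ b := fun h => hx (h ▸ hbS)
          by_cases hxv : x = v
          · show β x + tri v a b x = 0
            rw [hxv, hv2]
            have : tri v a b v = 1 := by simp [tri, hva, hvb]
            rw [this]
            decide
          · show β x + tri v a b x = 0
            rw [hβS x hx hxv]
            simp [tri, hxv, hxa, hxb]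
        have hsumA : (∑ x : G.V, (β x + tri v a b x)) = 0 := by
          rw [Finset.sum_add_distrib, hβsum, sum_tri, add_zero]
        rcases hreach (fun x => β x + tri v a b x) hsuppA hsumA with hRA | ⟨σ, hσ, hσeq⟩
        · left
          refine combine β (fun x => - tri v a b x) (fun x => β x + tri v a b x)
            (reach_congr (pair 1 1 (by decide) (by decide)) (fun x => ?_)) hRA
            (fun x => by ring)
          show (1 : ZMod 3) * zv v a x + 1 * zv v b x = - tri v a b x
          simp only [zv, tri]
          linear_combination ((if x = v then (1 : ZMod 3) else 0)) * h30
        · right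
          refine ⟨Fin.snoc σ (-1), fun t => ?_, fun x => ?_⟩
          · induction t using Fin.lastCases with
            | last => rw [Fin.snoc_last]; exact Or.inr rfl
            | cast t' => rw [Fin.snoc_castSucc]; exact hσ t'
          · rw [hsplit, Finset.sum_congr rfl fun t _ => by rw [Fin.snoc_castSucc],
              Fin.snoc_last]
            have := hσeq x
            linear_combination this

lemma no_coset {V : Type} [Fintype V] {k : ℕ} (w : Fin k → V → ZMod 3)
    (hind : ∀ c : Fin k → ZMod 3, (∀ x, ∑ t, c t * w t x = 0) → ∀ t, c t = 0)
    {u v : V} (huv : u ≠ v) (β : V → ZMod 3)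
    (h0 : ∃ σ : Fin k → ZMod 3, (∀ t, σ t = 1 ∨ σ t = -1) ∧ ∀ x, β x = ∑ t, σ t * w t x)
    (h1 : ∃ σ : Fin k → ZMod 3, (∀ t, σ t = 1 ∨ σ t = -1) ∧
      ∀ x, β x + zv u v x = ∑ t, σ t * w t x)
    (h2 : ∃ σ : Fin k → ZMod 3, (∀ t, σ t = 1 ∨ σ t = -1) ∧
      ∀ x, β x - zv u v x = ∑ t, σ t * w t x) : False := by
  obtain ⟨σ0, hσ0, hq0⟩ := h0
  obtain ⟨σ1, hσ1, hq1⟩ := h1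
  obtain ⟨σ2, hσ2, hq2⟩ := h2
  have hc : ∀ x, ∑ t, (σ1 t - σ0 t) * w t x = zv u v x := by
    intro x
    have : ∀ t, (σ1 t - σ0 t) * w t x = σ1 t * w t x - σ0 t * w t x := fun t => by ring
    rw [Finset.sum_congr rfl fun t _ => this t, Finset.sum_sub_distrib, ← hq1 x, ← hq0 x]
    ring
  have he : ∀ x, ∑ t, (σ0 t - σ2 t) * w t x = zv u v x := by
    intro x
    have : ∀ t, (σ0 t - σ2 t) * w t x = σ0 t * w t x - σ2 t * w t x := fun t => by ring
    rw [Finset.sum_congr rfl fun t _ => this t, Finset.sum_sub_distrib, ← hq2 x, ← hq0 x]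
    ring
  have hce : ∀ t, σ1 t - σ0 t = σ0 t - σ2 t := by
    intro t
    have := hind (fun t => (σ1 t - σ0 t) - (σ0 t - σ2 t)) (fun x => by
      have hsp : ∀ t, ((σ1 t - σ0 t) - (σ0 t - σ2 t)) * w t x
          = (σ1 t - σ0 t) * w t x - (σ0 t - σ2 t) * w t x := fun t => by ring
      rw [Finset.sum_congr rfl fun t _ => hsp t, Finset.sum_sub_distrib, hc x, he x, sub_self])
    exact sub_eq_zero.mp (this t)
  have hzu : zv u v u = 1 := by simp [zv, huv]
  have hnz : ∃ t, σ1 t - σ0 t ≠ 0 := by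
    by_contra hco
    push_neg at hco
    have := hc u
    rw [Finset.sum_congr rfl fun t _ => by rw [hco t, zero_mul], Finset.sum_const_zero,
      hzu] at this
    exact absurd this (by decide)
  obtain ⟨t, hct⟩ := hnz
  have hcet := hce t
  rcases hσ0 t with ha | ha <;> rcases hσ1 t with hb | hb <;> rcases hσ2 t with hc2 | hc2 <;>
    rw [ha, hb] at hct <;> rw [ha, hb, hc2] at hcet <;> revert hct hcet <;> decide

lemma realize (G : Multigraph) (o1 o2 : G.E → G.V) (β : G.V → ZMod 3)
    (h : Reach (fun e => (o1 e, o2 e)) Set.univ β) :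
    ∃ D : G.E → G.V × G.V, (∀ e, s(o1 e, o2 e) = s((D e).1, (D e).2)) ∧
      ∀ v : G.V, ((G.outDeg D v : ZMod 3) - (G.inDeg D v : ZMod 3)) = β v := by
  classical
  obtain ⟨ε, _, hnz, hbnd⟩ := h
  have h30 : (3 : ZMod 3) = 0 := by decide
  refine ⟨fun e => if ε e = 1 then (o1 e, o2 e) else (o2 e, o1 e), fun e => ?_, fun v0 => ?_⟩
  · show s(o1 e, o2 e) = s((if ε e = 1 then (o1 e, o2 e) else (o2 e, o1 e)).1,
      (if ε e = 1 then (o1 e, o2 e) else (o2 e, o1 e)).2)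
    by_cases h1 : ε e = 1
    · rw [if_pos h1]
    · rw [if_neg h1]
      exact Sym2.eq_swap
  · have hcard : ∀ p : G.E → Prop, ((({e | p e} : Set G.E).ncard : ZMod 3))
        = ∑ e : G.E, (if p e then (1 : ZMod 3) else 0) := by
      intro p
      rw [Set.ncard_eq_toFinset_card', Set.toFinset_setOf, Finset.card_filter]
      push_cast
      rfl
    unfold Multigraph.outDeg Multigraph.inDeg
    have hflip : ∀ f : G.E → G.V × G.V, ∀ j : G.V × G.V → G.V,
        {e : G.E | j (f e) = v0} = {e : G.E | v0 = j (f e)} := by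
      intro f j; ext e'; exact eq_comm
    rw [hflip _ Prod.fst, hflip _ Prod.snd, hcard, hcard, ← Finset.sum_sub_distrib,
      ← hbnd v0]
    refine Finset.sum_congr rfl fun e _ => ?_
    by_cases h1 : ε e = 1
    · have hD : (if ε e = 1 then (o1 e, o2 e) else (o2 e, o1 e)) = (o1 e, o2 e) := if_pos h1
      rw [hD, h1, one_mul]
    · have h2 : ε e = 2 := by
        rcases (by decide : ∀ u : ZMod 3, u = 0 ∨ u = 1 ∨ u = 2) (ε e) with h | h | h
        · exact absurd h (hnz e (Set.mem_univ e))
        · exact absurd h h1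
        · exact h
      have hD : (if ε e = 1 then (o1 e, o2 e) else (o2 e, o1 e)) = (o2 e, o1 e) := if_neg h1
      rw [hD, h2]
      show (if v0 = o2 e then (1:ZMod 3) else 0) - (if v0 = o1 e then 1 else 0)
        = 2 * ((if v0 = o1 e then 1 else 0) - (if v0 = o2 e then 1 else 0))
      linear_combination ((if v0 = o2 e then (1:ZMod 3) else 0)
        - (if v0 = o1 e then 1 else 0)) * h30

theorem stmt_9' (G : Multigraph) (F : Set G.E) (hT : G.IsTriangleTree Set.univ F)
    (hcyc : ∃ (vs : List G.V) (es : List G.E),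
      2 ≤ vs.length ∧ vs.Nodup ∧ es.Nodup ∧ es.length = vs.length ∧
      (∀ e ∈ es, e ∈ {e : G.E | e ∉ F}) ∧
      ∀ (i : ℕ) (h1 : i < es.length) (h2 : i < vs.length)
        (h3 : (i + 1) % vs.length < vs.length),
        G.ends (es.get ⟨i, h1⟩) = s(vs.get ⟨i, h2⟩, vs.get ⟨(i + 1) % vs.length, h3⟩)) :
    ∀ β : G.V → ZMod 3, (∑ v : G.V, β v) = 0 →
      ∃ D : G.E → G.V × G.V, G.IsOrientation D ∧
        ∀ v : G.V, ((G.outDeg D v : ZMod 3) - (G.inDeg D v : ZMod 3)) = β v := by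
  classical
  intro β hβsum
  have hex : ∀ e : G.E, ∃ a b, G.ends e = s(a, b) := fun e =>
    Sym2.ind (fun a b => ⟨a, b, rfl⟩) (G.ends e)
  choose o1 o2 ho using hex
  obtain ⟨hsub, k, w, μ, hWsupp, hind, hμw, hcol, hreach⟩ :=
    tt_main G (fun e => (o1 e, o2 e)) ho hT
  obtain ⟨vs, es, hL2, hvnd, hend, hlen, hesF, hends⟩ := hcyc
  haveI : NeZero vs.length := ⟨by omega⟩
  have hone : (1 : Fin vs.length).val = 1 := by
    rw [Fin.val_one']
    exact Nat.mod_eq_of_lt (by omega)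
  have hvaladd : ∀ i : Fin vs.length, (i + 1).val = (i.val + 1) % vs.length := by
    intro i
    rw [Fin.val_add, hone]
  -- the cycle edges, indexed by Fin vs.length
  have hgiends : ∀ i : Fin vs.length,
      G.ends (es.get ⟨i.1, lt_of_lt_of_eq i.2 hlen.symm⟩) = s(vs.get i, vs.get (i + 1)) := by
    intro i
    have h3 : (i.1 + 1) % vs.length < vs.length := Nat.mod_lt _ (by omega)
    have h := hends i.1 (lt_of_lt_of_eq i.2 hlen.symm) i.2 h3
    have hidx : (⟨(i.1 + 1) % vs.length, h3⟩ : Fin vs.length) = i + 1 :=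
      Fin.ext (by rw [hvaladd i])
    rw [hidx] at h
    exact h
  have hginj : Set.InjOn (fun i : Fin vs.length =>
      es.get ⟨i.1, lt_of_lt_of_eq i.2 hlen.symm⟩) ↑(Finset.univ : Finset (Fin vs.length)) := by
    intro i _ j _ hij
    have h := (List.Nodup.get_inj_iff hend).mp hij
    have hval := congrArg Fin.val h
    exact Fin.ext hval
  have hesSet : (fun i : Fin vs.length => es.get ⟨i.1, lt_of_lt_of_eq i.2 hlen.symm⟩) ''
      ↑(Finset.univ : Finset (Fin vs.length)) = {e | e ∈ es} := by
    rw [Finset.coe_univ, Set.image_univ]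
    ext e'
    constructor
    · rintro ⟨i, rfl⟩
      exact List.get_mem es _
    · intro he'
      obtain ⟨n, hn⟩ := List.mem_iff_get.mp he'
      exact ⟨⟨n.1, lt_of_lt_of_eq n.2 hlen⟩, hn⟩
  have hcycR : ∀ cf : Fin vs.length → ZMod 3, (∀ i, cf i ≠ 0) →
      Reach (fun e => (o1 e, o2 e)) {e | e ∈ es}
        (fun x => ∑ i, cf i * zv (vs.get i) (vs.get (i + 1)) x) := by
    intro cf hcf
    have h := reach_finset_sum (Finset.univ : Finset (Fin vs.length))
      (fun i => es.get ⟨i.1, lt_of_lt_of_eq i.2 hlen.symm⟩) hginj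
      (fun i x => cf i * zv (vs.get i) (vs.get (i + 1)) x)
      (fun i _ => reach_single (o := fun e => (o1 e, o2 e)) ho _ _ _ (hgiends i)
        (cf i) (hcf i))
    rw [hesSet] at h
    exact h
  have hTel : ∀ x, ∑ i : Fin vs.length, zv (vs.get i) (vs.get (i + 1)) x = 0 := by
    intro x
    have hsp : ∑ i : Fin vs.length, zv (vs.get i) (vs.get (i + 1)) x
        = (∑ i : Fin vs.length, (if x = vs.get i then (1 : ZMod 3) else 0))
          - ∑ i : Fin vs.length, (if x = vs.get (i + 1) then (1 : ZMod 3) else 0) := by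
      rw [← Finset.sum_sub_distrib]
      exact Finset.sum_congr rfl fun i _ => rfl
    have hb : ∑ i : Fin vs.length, (if x = vs.get (i + 1) then (1 : ZMod 3) else 0)
        = ∑ i : Fin vs.length, (if x = vs.get i then (1 : ZMod 3) else 0) := by
      have := (Equiv.addRight (1 : Fin vs.length)).bijective.sum_comp
        (fun i => if x = vs.get i then (1 : ZMod 3) else 0)
      exact this
    rw [hsp, hb, sub_self]
  -- distinguished cycle edge endpoints
  obtain ⟨i0, hi0val⟩ : ∃ i0 : Fin vs.length, i0.1 = 0 := ⟨⟨0, by omega⟩, rfl⟩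
  have hsval : (i0 + 1).val = 1 := by
    rw [hvaladd i0, hi0val]
    exact Nat.mod_eq_of_lt (by omega)
  have huv : vs.get i0 ≠ vs.get (i0 + 1) := by
    intro h
    have h' := (List.Nodup.get_inj_iff hvnd).mp h
    have := congrArg Fin.val h'
    rw [hi0val, hsval] at this
    exact absurd this (by omega)
  -- the three cycle contributions
  have hγ0 : ∀ x, ∑ i : Fin vs.length,
      (1 : ZMod 3) * zv (vs.get i) (vs.get (i + 1)) x = 0 := by
    intro x
    rw [Finset.sum_congr rfl fun i _ => one_mul _]
    exact hTel x
  have hγp : ∀ x, ∑ i : Fin vs.length,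
      (if i = i0 then (2 : ZMod 3) else 1) * zv (vs.get i) (vs.get (i + 1)) x
        = zv (vs.get i0) (vs.get (i0 + 1)) x := by
    intro x
    have per : ∀ i : Fin vs.length,
        (if i = i0 then (2 : ZMod 3) else 1) * zv (vs.get i) (vs.get (i + 1)) x
          = zv (vs.get i) (vs.get (i + 1)) x
            + (if i = i0 then zv (vs.get i) (vs.get (i + 1)) x else 0) := by
      intro i
      split_ifs with h
      · ring
      · ring
    rw [Finset.sum_congr rfl fun i _ => per i, Finset.sum_add_distrib, hTel x,
      Finset.sum_ite_eq' Finset.univ i0 (fun i => zv (vs.get i) (vs.get (i + 1)) x),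
      if_pos (Finset.mem_univ i0), zero_add]
  have hγm : ∀ x, ∑ i : Fin vs.length,
      (if i = i0 then (1 : ZMod 3) else 2) * zv (vs.get i) (vs.get (i + 1)) x
        = - zv (vs.get i0) (vs.get (i0 + 1)) x := by
    intro x
    have per : ∀ i : Fin vs.length,
        (if i = i0 then (1 : ZMod 3) else 2) * zv (vs.get i) (vs.get (i + 1)) x
          = (zv (vs.get i) (vs.get (i + 1)) x + zv (vs.get i) (vs.get (i + 1)) x)
            + (if i = i0 then - zv (vs.get i) (vs.get (i + 1)) x else 0) := by
      intro i
      split_ifs with h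
      · ring
      · ring
    rw [Finset.sum_congr rfl fun i _ => per i, Finset.sum_add_distrib,
      Finset.sum_add_distrib, hTel x,
      Finset.sum_ite_eq' Finset.univ i0 (fun i => - zv (vs.get i) (vs.get (i + 1)) x),
      if_pos (Finset.mem_univ i0)]
    ring
  -- the remaining edges
  have hRreach : Reach (fun e => (o1 e, o2 e)) {e : G.E | ¬ e ∈ F ∧ ¬ e ∈ es}
      (fun x => ∑ e ∈ ({e : G.E | ¬ e ∈ F ∧ ¬ e ∈ es}).toFinset, zv (o1 e) (o2 e) x) := by
    have h := reach_finset_sum ({e : G.E | ¬ e ∈ F ∧ ¬ e ∈ es}).toFinset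
      (fun e => e) (fun p _ q _ hpq => hpq)
      (fun e x => (1 : ZMod 3) * zv (o1 e) (o2 e) x)
      (fun e _ => reach_single (o := fun e => (o1 e, o2 e)) ho e (o1 e) (o2 e) (ho e) 1
        one_ne_zero)
    rw [Set.image_id', Set.coe_toFinset] at h
    refine reach_congr h fun x => ?_
    exact Finset.sum_congr rfl fun e _ => one_mul _
  have hγRsum : ∑ x : G.V,
      (∑ e ∈ ({e : G.E | ¬ e ∈ F ∧ ¬ e ∈ es}).toFinset, zv (o1 e) (o2 e) x) = 0 := by
    rw [Finset.sum_comm]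
    exact Finset.sum_eq_zero fun e _ => sum_zv _ _
  have htriv : ∀ δ : G.V → ZMod 3, ∀ x, x ∉ (Set.univ : Set G.V) → δ x = 0 :=
    fun δ x hx => absurd (Set.mem_univ x) hx
  -- disjointness and covering
  have hd1 : Disjoint F {e : G.E | e ∈ es} :=
    Set.disjoint_right.mpr fun e hees heF => (hesF e hees) heF
  have hd2 : Disjoint (F ∪ {e : G.E | e ∈ es}) {e : G.E | ¬ e ∈ F ∧ ¬ e ∈ es} :=
    Set.disjoint_right.mpr fun e heR hmem => by
      rcases hmem with hmem | hmem
      · exact heR.1 hmem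
      · exact heR.2 hmem
  have hcover : (F ∪ {e : G.E | e ∈ es}) ∪ {e : G.E | ¬ e ∈ F ∧ ¬ e ∈ es} = Set.univ := by
    ext e
    simp only [Set.mem_union, Set.mem_setOf_eq, Set.mem_univ, iff_true]
    by_cases h1 : e ∈ F
    · exact Or.inl (Or.inl h1)
    · by_cases h2 : e ∈ es
      · exact Or.inl (Or.inr h2)
      · exact Or.inr ⟨h1, h2⟩
  -- shorthand
  have final : ∀ γF γC : G.V → ZMod 3, Reach (fun e => (o1 e, o2 e)) F γF →
      Reach (fun e => (o1 e, o2 e)) {e : G.E | e ∈ es} γC →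
      (∀ x, (γF x + γC x)
        + (∑ e ∈ ({e : G.E | ¬ e ∈ F ∧ ¬ e ∈ es}).toFinset, zv (o1 e) (o2 e) x) = β x) →
      ∃ D : G.E → G.V × G.V, G.IsOrientation D ∧
        ∀ v : G.V, ((G.outDeg D v : ZMod 3) - (G.inDeg D v : ZMod 3)) = β v := by
    intro γF γC hF hC hsum
    have hu1 := reach_union hd1 hF hC
    have hu2 := reach_union hd2 hu1 hRreach
    rw [hcover] at hu2
    have hu3 := reach_congr hu2 hsum
    obtain ⟨D, hDor, hDdeg⟩ := realize G o1 o2 β hu3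
    exact ⟨D, fun e => (ho e).trans (hDor e), hDdeg⟩
  -- candidate boundary values for the triangle-tree part
  rcases hreach (fun x => β x
      - (∑ e ∈ ({e : G.E | ¬ e ∈ F ∧ ¬ e ∈ es}).toFinset, zv (o1 e) (o2 e) x))
      (htriv _) (by rw [Finset.sum_sub_distrib, hβsum, hγRsum, sub_zero]) with hR0 | hN0
  · exact final _ _ hR0 (hcycR (fun _ => 1) (fun i => by show (1 : ZMod 3) ≠ 0; decide))
      (fun x => by rw [hγ0 x]; ring)
  rcases hreach (fun x => β x
      - (∑ e ∈ ({e : G.E | ¬ e ∈ F ∧ ¬ e ∈ es}).toFinset, zv (o1 e) (o2 e) x)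
      - zv (vs.get i0) (vs.get (i0 + 1)) x)
      (htriv _) (by rw [Finset.sum_sub_distrib, Finset.sum_sub_distrib, hβsum, hγRsum,
        sum_zv, sub_zero, sub_zero]) with hRp | hNp
  · exact final _ _ hRp
      (hcycR (fun i => if i = i0 then 2 else 1) (fun i => by
        show (if i = i0 then (2 : ZMod 3) else 1) ≠ 0
        split_ifs <;> decide))
      (fun x => by rw [hγp x]; ring)
  rcases hreach (fun x => β x
      - (∑ e ∈ ({e : G.E | ¬ e ∈ F ∧ ¬ e ∈ es}).toFinset, zv (o1 e) (o2 e) x)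
      + zv (vs.get i0) (vs.get (i0 + 1)) x)
      (htriv _) (by rw [Finset.sum_add_distrib, Finset.sum_sub_distrib, hβsum, hγRsum,
        sum_zv, sub_zero, add_zero]) with hRm | hNm
  · exact final _ _ hRm
      (hcycR (fun i => if i = i0 then 1 else 2) (fun i => by
        show (if i = i0 then (1 : ZMod 3) else 2) ≠ 0
        split_ifs <;> decide))
      (fun x => by rw [hγm x]; ring)
  · exact (no_coset w hind huv _ hN0 hNm hNp).elim

/-- Let `G` contain a spanning triangle-tree `T`. If `G − E(T)`
contains a cycle (possibly a 2-cycle of parallel edges), then `G` is `Z3`-connected. -/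
theorem stmt_9 (G : Multigraph) (F : Set G.E) (hT : G.IsTriangleTree Set.univ F)
    (hcyc : G.HasCycleIn {e : G.E | e ∉ F}) :
    G.Z3Connected := by
  intro β hβ
  exact stmt_9' G F hT hcyc β hβ
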